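/- Let μ = Unif[0, 1+c] and ν = Unif[0,1] for c > 0, and Γ the set of bounded 1-Lipschitz functions on ℝ. Let b ∈ (0,1) solve exp(1−b) − (1−b) = 1 + c. Then G_Γ(μ‖ν) = −log(1+c) + (1+c−b)²/(2(1+c)). -/

import Mathlib

open MeasureTheory Real Filter

/-- The `Γ`-divergence for a set `Γ` of real functions on `ℝ`. -/
noncomputable def gDivF (Γ : Set (ℝ → ℝ)) (μ ν : Measure ℝ) : EReal :=
  ⨆ g ∈ Γ, (((∫ x, g x ∂μ) - Real.log (∫ x, Real.exp (g x) ∂ν) : ℝ) : EReal)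

/-- `W_Γ(μ − ν) = sup_{g ∈ Γ} ∫ g d(μ−ν)`. -/
noncomputable def wGammaF (Γ : Set (ℝ → ℝ)) (μ ν : Measure ℝ) : EReal :=
  ⨆ g ∈ Γ, (((∫ x, g x ∂μ) - ∫ x, g x ∂ν : ℝ) : EReal)

/-- Bounded `L`-Lipschitz functions on `ℝ`. -/
def lipSet (L : NNReal) : Set (ℝ → ℝ) :=
  {g : ℝ → ℝ | LipschitzWith L g ∧ ∃ C : ℝ, ∀ x, |g x| ≤ C}

/-- The uniform distribution on `[0, r]`. -/
noncomputable def unifMeas (r : ℝ) : Measure ℝ :=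
  (ENNReal.ofReal r)⁻¹ • volume.restrict (Set.Icc 0 r)

section Aux
open Set

noncomputable def gsF (b B : ℝ) : ℝ → ℝ := fun x => min (max (x - b) 0) (B - b)

lemma lip_sub_const (b : ℝ) : LipschitzWith 1 (fun x : ℝ => x - b) :=
  LipschitzWith.of_dist_le_mul (fun x y => by simp [Real.dist_eq])

lemma gsF_lip (b B : ℝ) : LipschitzWith 1 (gsF b B) :=
  ((lip_sub_const b).max_const 0).min_const (B - b)

lemma gsF_cont (b B : ℝ) : Continuous (gsF b B) := (gsF_lip b B).continuous

lemma gsF_nonneg (b B : ℝ) (h : b ≤ B) (x : ℝ) : 0 ≤ gsF b B x :=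
  le_min (le_max_right _ _) (by linarith)

lemma gsF_mem (b B : ℝ) (h : b ≤ B) : gsF b B ∈ lipSet 1 := by
  refine ⟨gsF_lip b B, B - b, fun x => ?_⟩
  rw [abs_le]
  exact ⟨by linarith [gsF_nonneg b B h x], min_le_right _ _⟩

lemma gsF_eq_zero (b B : ℝ) (hB : b ≤ B) {x : ℝ} (hx : x ≤ b) : gsF b B x = 0 := by
  unfold gsF
  rw [max_eq_right (by linarith), min_eq_left (by linarith)]

lemma gsF_eq_id (b B : ℝ) {x : ℝ} (hx1 : b ≤ x) (hx2 : x ≤ B) : gsF b B x = x - b := by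
  unfold gsF
  rw [max_eq_left (by linarith), min_eq_left (by linarith)]


lemma integral_unifMeas (r : ℝ) (hr : 0 < r) (f : ℝ → ℝ) :
    ∫ x, f x ∂unifMeas r = r⁻¹ * ∫ x in (0:ℝ)..r, f x := by
  unfold unifMeas
  rw [integral_smul_measure, ENNReal.toReal_inv, ENNReal.toReal_ofReal hr.le,
    intervalIntegral.integral_of_le hr.le, smul_eq_mul,
    ← MeasureTheory.integral_Icc_eq_integral_Ioc]

lemma int_gsF (b B : ℝ) (hb : 0 ≤ b) (hB : b ≤ B) :
    ∫ x in (0:ℝ)..B, gsF b B x = (B - b) ^ 2 / 2 := by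
  have hi1 : IntervalIntegrable (gsF b B) volume 0 b := (gsF_cont b B).intervalIntegrable _ _
  have hi2 : IntervalIntegrable (gsF b B) volume b B := (gsF_cont b B).intervalIntegrable _ _
  rw [← intervalIntegral.integral_add_adjacent_intervals hi1 hi2]
  have e1 : ∫ x in (0:ℝ)..b, gsF b B x = 0 := by
    rw [intervalIntegral.integral_congr (g := fun _ => (0:ℝ)) ?_, intervalIntegral.integral_const]
    · simp
    · intro x hx
      rw [Set.uIcc_of_le hb] at hx
      exact gsF_eq_zero b B hB hx.2
  have e2 : ∫ x in b..B, gsF b B x = (B - b) ^ 2 / 2 := by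
    rw [intervalIntegral.integral_congr (g := fun x => x - b) ?_]
    · rw [intervalIntegral.integral_sub intervalIntegral.intervalIntegrable_id
        (intervalIntegrable_const), integral_id,
        intervalIntegral.integral_const, smul_eq_mul]
      ring
    · intro x hx
      rw [Set.uIcc_of_le hB] at hx
      exact gsF_eq_id b B hx.1 hx.2
  rw [e1, e2]; ring

lemma int_exp_gsF (b B : ℝ) (hb : 0 ≤ b) (h1 : b ≤ 1) (hB : 1 ≤ B) :
    ∫ x in (0:ℝ)..1, Real.exp (gsF b B x) = b + Real.exp (1 - b) - 1 := by
  have hc : Continuous fun x => Real.exp (gsF b B x) := Real.continuous_exp.comp (gsF_cont b B)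
  have hi1 : IntervalIntegrable (fun x => Real.exp (gsF b B x)) volume 0 b :=
    hc.intervalIntegrable _ _
  have hi2 : IntervalIntegrable (fun x => Real.exp (gsF b B x)) volume b 1 :=
    hc.intervalIntegrable _ _
  rw [← intervalIntegral.integral_add_adjacent_intervals hi1 hi2]
  have e1 : ∫ x in (0:ℝ)..b, Real.exp (gsF b B x) = b := by
    rw [intervalIntegral.integral_congr (g := fun _ => (1:ℝ)) ?_]
    · simp
    · intro x hx
      rw [Set.uIcc_of_le hb] at hx
      show Real.exp (gsF b B x) = 1
      rw [gsF_eq_zero b B (le_trans h1 hB) hx.2, Real.exp_zero]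
  have e2 : ∫ x in b..(1:ℝ), Real.exp (gsF b B x) = Real.exp (1 - b) - 1 := by
    rw [intervalIntegral.integral_congr (g := fun x => Real.exp (x - b)) ?_]
    · rw [intervalIntegral.integral_comp_sub_right (fun x => Real.exp x) b, integral_exp]
      simp
    · intro x hx
      rw [Set.uIcc_of_le h1] at hx
      show Real.exp (gsF b B x) = Real.exp (x - b)
      rw [gsF_eq_id b B hx.1 (le_trans hx.2 hB)]
  rw [e1, e2]; ring


noncomputable def wF (b : ℝ) : ℝ → ℝ := fun x => if x ≤ 1 then 1 - Real.exp (x - b) else 1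

lemma wF_meas (b : ℝ) : Measurable (wF b) := by
  unfold wF
  exact Measurable.ite measurableSet_Iic
    (measurable_const.sub ((measurable_id.sub measurable_const).exp)) measurable_const

lemma wF_bound (b : ℝ) (x : ℝ) : |wF b x| ≤ 1 + Real.exp (1 - b) := by
  unfold wF
  split_ifs with h
  · have h1 : Real.exp (x - b) ≤ Real.exp (1 - b) := Real.exp_le_exp.mpr (by linarith)
    have h2 : 0 < Real.exp (x - b) := Real.exp_pos _
    rw [abs_le]; constructor <;> nlinarith [Real.exp_pos (1 - b)]
  · rw [abs_one]; nlinarith [Real.exp_pos (1 - b)]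

lemma intInt_of_bounded (f : ℝ → ℝ) (hf : Measurable f) (C : ℝ) (hC : ∀ x, |f x| ≤ C)
    (a b : ℝ) : IntervalIntegrable f volume a b := by
  rw [intervalIntegrable_iff]
  have hCint : IntegrableOn (fun _ => C) (Set.uIoc a b) volume := by
    rw [integrableOn_const_iff]
    exact Or.inr (by rw [Set.uIoc]; exact measure_Ioc_lt_top)
  exact hCint.mono' hf.aestronglyMeasurable
    (ae_of_all _ fun x => by simpa [Real.norm_eq_abs] using hC x)

lemma int_wF (b B a : ℝ) (hba : b ≤ a) (ha1 : a ≤ 1) (hB : 1 ≤ B)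
    (hE : Real.exp (1 - b) = B + 1 - b) :
    ∫ x in Set.Ioc a B, wF b x = Real.exp (a - b) + b - a - 1 := by
  have haB : a ≤ B := le_trans ha1 hB
  have hi : ∀ u v : ℝ, IntervalIntegrable (wF b) volume u v :=
    fun u v => intInt_of_bounded _ (wF_meas b) _ (wF_bound b) u v
  rw [← intervalIntegral.integral_of_le haB,
    ← intervalIntegral.integral_add_adjacent_intervals (hi a 1) (hi 1 B)]
  have e1 : ∫ x in a..(1:ℝ), wF b x = (1 - a) - (Real.exp (1 - b) - Real.exp (a - b)) := by
    rw [intervalIntegral.integral_of_le ha1,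
      setIntegral_congr_fun (f := wF b) measurableSet_Ioc (g := fun x => 1 - Real.exp (x - b))
        (fun x hx => by unfold wF; rw [if_pos hx.2]),
      ← intervalIntegral.integral_of_le ha1,
      intervalIntegral.integral_sub intervalIntegrable_const
        ((by continuity : Continuous fun x : ℝ => Real.exp (x - b)).intervalIntegrable _ _),
      intervalIntegral.integral_const,
      intervalIntegral.integral_comp_sub_right (fun x => Real.exp x) b, integral_exp]
    simp
  have e2 : ∫ x in (1:ℝ)..B, wF b x = B - 1 := by
    rw [intervalIntegral.integral_of_le hB,
      setIntegral_congr_fun (f := wF b) measurableSet_Ioc (g := fun _ => (1:ℝ))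
        (fun x hx => by unfold wF; rw [if_neg (not_le.mpr hx.1)]),
      ← intervalIntegral.integral_of_le hB, intervalIntegral.integral_const, smul_eq_mul,
      mul_one]
  rw [e1, e2]; linarith

lemma int_wF_nonneg (b B a : ℝ) (hba : b ≤ a) (haB : a ≤ B) (hB : 1 ≤ B) (hb1 : b ≤ 1)
    (hE : Real.exp (1 - b) = B + 1 - b) :
    0 ≤ ∫ x in Set.Ioc a B, wF b x := by
  by_cases ha1 : a ≤ 1
  · rw [int_wF b B a hba ha1 hB hE]
    have := Real.add_one_le_exp (a - b)
    linarith
  · push_neg at ha1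
    rw [setIntegral_congr_fun (f := wF b) measurableSet_Ioc (g := fun _ => (1:ℝ))
        (fun x hx => by unfold wF; rw [if_neg (not_le.mpr (lt_trans ha1 hx.1))])]
    rw [setIntegral_const, smul_eq_mul, mul_one]
    exact measureReal_nonneg

lemma int_wF_total (b B : ℝ) (hb1 : b ≤ 1) (hB : 1 ≤ B)
    (hE : Real.exp (1 - b) = B + 1 - b) :
    ∫ x in Set.Ioc b B, wF b x = 0 := by
  rw [int_wF b B b le_rfl hb1 hB hE]; simp

lemma upperSet_integral_nonneg (b B : ℝ) (w : ℝ → ℝ)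
    (hW : ∀ a ∈ Set.Icc b B, 0 ≤ ∫ x in Set.Ioc a B, w x)
    (U : Set ℝ) (hU : ∀ ⦃x y⦄, x ∈ U → x ≤ y → y ∈ U) :
    0 ≤ ∫ x in U ∩ Set.Ioc b B, w x := by
  by_cases hne : (U ∩ Set.Ioc b B).Nonempty
  · set S := U ∩ Set.Ioc b B with hS
    have hbd : BddBelow S := ⟨b, fun x hx => hx.2.1.le⟩
    set a := sInf S with ha
    have hab : b ≤ a := le_csInf hne (fun x hx => hx.2.1.le)
    have haB : a ≤ B := by
      obtain ⟨y, hy⟩ := hne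
      exact le_trans (csInf_le hbd hy) hy.2.2
    have hsub1 : Set.Ioc a B ⊆ S := by
      intro x hx
      obtain ⟨y, hyS, hya⟩ := exists_lt_of_csInf_lt hne hx.1
      exact ⟨hU hyS.1 hya.le, lt_of_le_of_lt hab hx.1, hx.2⟩
    have hsub2 : S ⊆ Set.Icc a B := fun x hx => ⟨csInf_le hbd hx, hx.2.2⟩
    have heq : ∫ x in S, w x = ∫ x in Set.Ioc a B, w x := by
      by_cases haS : a ∈ S
      · have hSe : S = Set.Icc a B := by
          apply Set.Subset.antisymm hsub2
          intro x hx
          rcases eq_or_lt_of_le hx.1 with h | h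
          · rwa [← h]
          · exact hsub1 ⟨h, hx.2⟩
        rw [hSe, MeasureTheory.integral_Icc_eq_integral_Ioc]
      · have hSe : S = Set.Ioc a B := by
          apply Set.Subset.antisymm _ hsub1
          intro x hx
          rcases eq_or_lt_of_le (hsub2 hx).1 with h | h
          · exact absurd (h ▸ hx) haS
          · exact ⟨h, hx.2.2⟩
        rw [hSe]
    rw [heq]
    exact hW a ⟨hab, haB⟩
  · rw [Set.not_nonempty_iff_eq_empty] at hne
    rw [hne]; simp


lemma key_nonneg (b B : ℝ) (hbB : b ≤ B) (w : ℝ → ℝ) (hwm : Measurable w)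
    (Cw : ℝ) (hwb : ∀ x, |w x| ≤ Cw)
    (hW : ∀ a ∈ Set.Icc b B, 0 ≤ ∫ x in Set.Ioc a B, w x)
    (φ : ℝ → ℝ) (hφm : Monotone φ) (hφc : Continuous φ) (hφb : φ b = 0) :
    0 ≤ ∫ x in Set.Ioc b B, φ x * w x := by
  set M := φ B with hM
  set F : ℝ → ℝ → ℝ := fun t x => if 0 < t ∧ t < φ x then w x else 0 with hF
  have hCw0 : 0 ≤ Cw := le_trans (abs_nonneg _) (hwb 0)
  haveI : IsFiniteMeasure (volume.restrict (Set.Ioc (0:ℝ) M)) :=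
    ⟨by rw [Measure.restrict_apply_univ]; exact measure_Ioc_lt_top⟩
  haveI : IsFiniteMeasure (volume.restrict (Set.Ioc b B)) :=
    ⟨by rw [Measure.restrict_apply_univ]; exact measure_Ioc_lt_top⟩
  have hAm : MeasurableSet {p : ℝ × ℝ | 0 < p.1 ∧ p.1 < φ p.2} := by
    have : IsOpen {p : ℝ × ℝ | 0 < p.1 ∧ p.1 < φ p.2} :=
      (isOpen_lt continuous_const continuous_fst).inter
        (isOpen_lt continuous_fst (hφc.comp continuous_snd))
    exact this.measurableSet
  have hFm : Measurable (fun p : ℝ × ℝ => F p.1 p.2) :=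
    Measurable.ite hAm (hwm.comp measurable_snd) measurable_const
  have hFi : Integrable (Function.uncurry F)
      ((volume.restrict (Set.Ioc (0:ℝ) M)).prod (volume.restrict (Set.Ioc b B))) := by
    refine (integrable_const Cw).mono' hFm.aestronglyMeasurable (ae_of_all _ fun p => ?_)
    rw [Real.norm_eq_abs]
    show |F p.1 p.2| ≤ Cw
    rw [hF]
    dsimp only
    split_ifs with h
    · exact hwb _
    · simpa using hCw0
  have swap := MeasureTheory.integral_integral_swap (f := F) hFi
  have hx : ∀ x ∈ Set.Ioc b B, (∫ t in Set.Ioc (0:ℝ) M, F t x) = φ x * w x := by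
    intro x hxm
    have hφx0 : 0 ≤ φ x := hφb ▸ hφm hxm.1.le
    have hφxM : φ x ≤ M := hφm hxm.2
    have e1 : (fun t => F t x) = (Set.Ioo (0:ℝ) (φ x)).indicator (fun _ => w x) := by
      funext t
      show (if 0 < t ∧ t < φ x then w x else 0) = _
      by_cases h : 0 < t ∧ t < φ x
      · rw [if_pos h]
        exact (Set.indicator_of_mem (Set.mem_Ioo.mpr h) (fun _ => w x)).symm
      · rw [if_neg h]
        exact (Set.indicator_of_notMem (fun hm => h (Set.mem_Ioo.mp hm)) (fun _ => w x)).symm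
    rw [e1, integral_indicator measurableSet_Ioo, Measure.restrict_restrict measurableSet_Ioo,
      Set.inter_eq_left.mpr (fun t ht => Set.mem_Ioc.mpr
        ⟨(Set.mem_Ioo.mp ht).1, le_trans (Set.mem_Ioo.mp ht).2.le hφxM⟩),
      setIntegral_const, Real.volume_real_Ioo, smul_eq_mul, max_eq_left (by linarith)]
    ring
  have ht : ∀ t ∈ Set.Ioc (0:ℝ) M, 0 ≤ ∫ x in Set.Ioc b B, F t x := by
    intro t htm
    have e1 : (fun x => F t x) = ({y | t < φ y}).indicator w := by
      funext x
      show (if 0 < t ∧ t < φ x then w x else 0) = _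
      by_cases h : t < φ x
      · rw [if_pos ⟨htm.1, h⟩]
        exact (Set.indicator_of_mem (show x ∈ {y | t < φ y} from h) w).symm
      · rw [if_neg (fun hh : 0 < t ∧ t < φ x => h hh.2)]
        exact (Set.indicator_of_notMem (show x ∉ {y | t < φ y} from h) w).symm
    have hUm : MeasurableSet {y | t < φ y} := (isOpen_lt continuous_const hφc).measurableSet
    rw [e1, integral_indicator hUm, Measure.restrict_restrict hUm]
    exact upperSet_integral_nonneg b B w hW _ (fun x y hx hxy => lt_of_lt_of_le hx (hφm hxy))
  calc (0:ℝ) ≤ ∫ t in Set.Ioc (0:ℝ) M, ∫ x in Set.Ioc b B, F t x :=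
        setIntegral_nonneg measurableSet_Ioc ht
    _ = ∫ x in Set.Ioc b B, ∫ t in Set.Ioc (0:ℝ) M, F t x := swap
    _ = ∫ x in Set.Ioc b B, φ x * w x := setIntegral_congr_fun measurableSet_Ioc hx


set_option maxHeartbeats 1000000 in
lemma big_ineq (b B : ℝ) (g : ℝ → ℝ) (hb0 : 0 < b) (hb1 : b < 1) (h1B : 1 < B)
    (hE : Real.exp (1 - b) = B + 1 - b) (hg : LipschitzWith 1 g) :
    (∫ x in (0:ℝ)..B, (g x - gsF b B x))
      ≤ ∫ x in (0:ℝ)..1, (g x - gsF b B x) * Real.exp (gsF b B x) := by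
  have hgc : Continuous g := hg.continuous
  have hgsc : Continuous (gsF b B) := gsF_cont b B
  have hhc : Continuous (fun x => g x - gsF b B x) := hgc.sub hgsc
  have hhec : Continuous (fun x => (g x - gsF b B x) * Real.exp (gsF b B x)) :=
    hhc.mul (Real.continuous_exp.comp hgsc)
  have hbB : b ≤ B := le_trans hb1.le h1B.le
  set φ : ℝ → ℝ := fun x => g b - g x + x - b with hφ
  have hφc : Continuous φ := by
    apply Continuous.sub _ continuous_const
    exact (continuous_const.sub hgc).add continuous_id
  have hφm : Monotone φ := by
    intro x y hxy
    have hd := hg.dist_le_mul x y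
    rw [Real.dist_eq, Real.dist_eq, NNReal.coe_one, one_mul, abs_le] at hd
    have h2 : |x - y| = y - x := by rw [abs_sub_comm, abs_of_nonneg (by linarith)]
    rw [h2] at hd
    simp only [hφ]
    linarith [hd.1]
  have hφb : φ b = 0 := by simp [hφ]
  -- the nonnegativity from key lemma
  have hkey : 0 ≤ ∫ x in Set.Ioc b B, φ x * wF b x :=
    key_nonneg b B hbB (wF b) (wF_meas b) (1 + Real.exp (1 - b)) (wF_bound b)
      (fun a ha => int_wF_nonneg b B a ha.1 ha.2 h1B.le hb1.le hE)
      φ hφm hφc hφb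
  -- split the set integral into two interval integrals
  set eb : ℝ → ℝ := fun x => Real.exp (x - b) with heb
  have hebc : Continuous eb := Real.continuous_exp.comp (continuous_id.sub continuous_const)
  have hint1 : IntegrableOn (fun x => φ x * wF b x) (Set.Ioc b 1) volume := by
    have h0 : IntegrableOn (fun x => φ x * (1 - eb x)) (Set.Ioc b 1) volume :=
      (hφc.mul (continuous_const.sub hebc)).integrableOn_Ioc
    exact h0.congr_fun (fun x hx => by rw [show wF b x = 1 - eb x from if_pos hx.2])
      measurableSet_Ioc
  have hint2 : IntegrableOn (fun x => φ x * wF b x) (Set.Ioc 1 B) volume := by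
    have h0 : IntegrableOn (fun x => φ x * 1) (Set.Ioc 1 B) volume :=
      (hφc.mul continuous_const).integrableOn_Ioc
    exact h0.congr_fun (fun x hx => by
      rw [show wF b x = 1 from if_neg (not_le.mpr hx.1)]) measurableSet_Ioc
  have hsplit : ∫ x in Set.Ioc b B, φ x * wF b x
      = (∫ x in b..(1:ℝ), φ x * (1 - eb x)) + ∫ x in (1:ℝ)..B, φ x := by
    rw [← Set.Ioc_union_Ioc_eq_Ioc hb1.le h1B.le,
      setIntegral_union (Set.Ioc_disjoint_Ioc_of_le le_rfl) measurableSet_Ioc hint1 hint2]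
    congr 1
    · rw [intervalIntegral.integral_of_le hb1.le]
      exact setIntegral_congr_fun measurableSet_Ioc
        (fun x hx => by rw [show wF b x = 1 - eb x from if_pos hx.2])
    · rw [intervalIntegral.integral_of_le h1B.le]
      refine setIntegral_congr_fun measurableSet_Ioc (fun x hx => ?_)
      rw [show wF b x = 1 from if_neg (not_le.mpr hx.1), mul_one]
  -- atoms
  have ii : ∀ (f : ℝ → ℝ), Continuous f → ∀ (u v : ℝ), IntervalIntegrable f volume u v :=
    fun f hf u v => hf.intervalIntegrable u v
  have hc1 : ∫ x in b..(1:ℝ), eb x = Real.exp (1 - b) - 1 := by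
    rw [heb]
    rw [intervalIntegral.integral_comp_sub_right (fun x => Real.exp x) b, integral_exp]
    simp
  -- expand piece 1
  have hL1 : ∫ x in b..(1:ℝ), φ x * (1 - eb x)
      = (g b * ((1 - b) - (Real.exp (1 - b) - 1))
        - ((∫ x in b..(1:ℝ), g x) - (∫ x in b..(1:ℝ), g x * eb x)))
        + ((∫ x in b..(1:ℝ), (x - b)) - ∫ x in b..(1:ℝ), (x - b) * eb x) := by
    have e : (fun x => φ x * (1 - eb x))
        = fun x => ((fun x => g b * 1 - g b * eb x) x - (fun x => g x - g x * eb x) x)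
          + (fun x => (x - b) - (x - b) * eb x) x := by
      funext x; simp only [hφ]; ring
    rw [e, intervalIntegral.integral_add
        (((ii _ (by fun_prop) b 1)).sub (ii _ (by fun_prop) b 1))
        (ii _ (by fun_prop) b 1),
      intervalIntegral.integral_sub (ii _ (by fun_prop) b 1) (ii _ (by fun_prop) b 1),
      intervalIntegral.integral_sub (ii _ (by fun_prop) b 1) (ii _ (by fun_prop) b 1),
      intervalIntegral.integral_sub (ii _ (by fun_prop) b 1) (ii _ (by fun_prop) b 1),
      intervalIntegral.integral_sub (ii _ (by fun_prop) b 1) (ii _ (by fun_prop) b 1)]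
    rw [intervalIntegral.integral_const_mul, intervalIntegral.integral_const_mul, hc1]
    rw [intervalIntegral.integral_const, smul_eq_mul]
    ring
  have hL2 : ∫ x in (1:ℝ)..B, φ x
      = g b * (B - 1) - (∫ x in (1:ℝ)..B, g x) + ∫ x in (1:ℝ)..B, (x - b) := by
    have e : φ = fun x => ((fun _ => g b) x - (fun x => g x) x) + (fun x => x - b) x := by
      funext x; simp only [hφ]; ring
    rw [e, intervalIntegral.integral_add
        ((ii _ (by fun_prop) 1 B).sub (ii _ (by fun_prop) 1 B)) (ii _ (by fun_prop) 1 B),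
      intervalIntegral.integral_sub (ii _ (by fun_prop) 1 B) (ii _ (by fun_prop) 1 B),
      intervalIntegral.integral_const, smul_eq_mul]
    ring
  -- expand the RHS-LHS difference
  have hR1 : ∫ x in (0:ℝ)..1, (g x - gsF b B x) * Real.exp (gsF b B x)
      = (∫ x in (0:ℝ)..b, g x)
        + ((∫ x in b..(1:ℝ), g x * eb x) - ∫ x in b..(1:ℝ), (x - b) * eb x) := by
    rw [← intervalIntegral.integral_add_adjacent_intervals (a := (0:ℝ)) (b := b) (c := (1:ℝ))
      (ii _ hhec 0 b) (ii _ hhec b 1)]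
    congr 1
    · rw [intervalIntegral.integral_of_le hb0.le, intervalIntegral.integral_of_le hb0.le]
      refine setIntegral_congr_fun measurableSet_Ioc (fun x hx => ?_)
      rw [gsF_eq_zero b B hbB hx.2, Real.exp_zero, sub_zero, mul_one]
    · rw [← intervalIntegral.integral_sub (ii _ (by fun_prop) b 1) (ii _ (by fun_prop) b 1),
        intervalIntegral.integral_of_le hb1.le, intervalIntegral.integral_of_le hb1.le]
      refine setIntegral_congr_fun measurableSet_Ioc (fun x hx => ?_)
      rw [gsF_eq_id b B hx.1.le (le_trans hx.2 h1B.le), heb]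
      ring
  have hR2 : ∫ x in (0:ℝ)..B, (g x - gsF b B x)
      = (∫ x in (0:ℝ)..b, g x)
        + ((∫ x in b..(1:ℝ), g x) - ∫ x in b..(1:ℝ), (x - b))
        + ((∫ x in (1:ℝ)..B, g x) - ∫ x in (1:ℝ)..B, (x - b)) := by
    rw [← intervalIntegral.integral_add_adjacent_intervals (a := (0:ℝ)) (b := (1:ℝ)) (c := B)
      (ii _ hhc 0 1) (ii _ hhc 1 B),
      ← intervalIntegral.integral_add_adjacent_intervals (a := (0:ℝ)) (b := b) (c := (1:ℝ))
      (ii _ hhc 0 b) (ii _ hhc b 1)]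
    have p1 : ∫ x in (0:ℝ)..b, (g x - gsF b B x) = ∫ x in (0:ℝ)..b, g x := by
      rw [intervalIntegral.integral_of_le hb0.le, intervalIntegral.integral_of_le hb0.le]
      refine setIntegral_congr_fun measurableSet_Ioc (fun x hx => ?_)
      rw [gsF_eq_zero b B hbB hx.2, sub_zero]
    have p2 : ∫ x in b..(1:ℝ), (g x - gsF b B x)
        = (∫ x in b..(1:ℝ), g x) - ∫ x in b..(1:ℝ), (x - b) := by
      rw [← intervalIntegral.integral_sub (ii _ (by fun_prop) b 1) (ii _ (by fun_prop) b 1),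
        intervalIntegral.integral_of_le hb1.le, intervalIntegral.integral_of_le hb1.le]
      refine setIntegral_congr_fun measurableSet_Ioc (fun x hx => ?_)
      rw [gsF_eq_id b B hx.1.le (le_trans hx.2 h1B.le)]
    have p3 : ∫ x in (1:ℝ)..B, (g x - gsF b B x)
        = (∫ x in (1:ℝ)..B, g x) - ∫ x in (1:ℝ)..B, (x - b) := by
      rw [← intervalIntegral.integral_sub (ii _ (by fun_prop) 1 B) (ii _ (by fun_prop) 1 B),
        intervalIntegral.integral_of_le h1B.le, intervalIntegral.integral_of_le h1B.le]
      refine setIntegral_congr_fun measurableSet_Ioc (fun x hx => ?_)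
      rw [gsF_eq_id b B (le_trans hb1.le hx.1.le) hx.2]
    rw [p1, p2, p3]
  rw [hsplit, hL1, hL2, hE] at hkey
  rw [hR2, hR1]
  ring_nf at hkey ⊢
  linarith [hkey]


lemma upper_bound (b B : ℝ) (g : ℝ → ℝ) (hb0 : 0 < b) (hb1 : b < 1) (h1B : 1 < B)
    (hE : Real.exp (1 - b) = B + 1 - b) (hg : LipschitzWith 1 g) :
    B⁻¹ * (∫ x in (0:ℝ)..B, g x) - Real.log (∫ x in (0:ℝ)..1, Real.exp (g x))
      ≤ B⁻¹ * (∫ x in (0:ℝ)..B, gsF b B x) - Real.log B := by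
  have hgc : Continuous g := hg.continuous
  have hgsc : Continuous (gsF b B) := gsF_cont b B
  have hegs : Continuous fun x => Real.exp (gsF b B x) := Real.continuous_exp.comp hgsc
  have heg : Continuous fun x => Real.exp (g x) := Real.continuous_exp.comp hgc
  have hB0 : (0:ℝ) < B := lt_trans one_pos h1B
  have hZ : ∫ x in (0:ℝ)..1, Real.exp (gsF b B x) = B := by
    rw [int_exp_gsF b B hb0.le hb1.le h1B.le, hE]; ring
  set h : ℝ → ℝ := fun x => g x - gsF b B x with hh
  have hhc : Continuous h := hgc.sub hgsc
  set m : ℝ := B⁻¹ * ∫ x in (0:ℝ)..1, h x * Real.exp (gsF b B x) with hm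
  -- Jensen: B * exp m ≤ ∫ exp g
  have hmono : ∀ x, Real.exp m * (Real.exp (gsF b B x) * (1 + (h x - m)))
      ≤ Real.exp (g x) := by
    intro x
    have p1 : Real.exp m * ((h x - m) + 1) ≤ Real.exp m * Real.exp (h x - m) :=
      mul_le_mul_of_nonneg_left (Real.add_one_le_exp _) (Real.exp_pos m).le
    have p2 : Real.exp m * Real.exp (h x - m) = Real.exp (h x) := by
      rw [← Real.exp_add]; congr 1; ring
    have p3 : Real.exp (gsF b B x) * Real.exp (h x) = Real.exp (g x) := by
      rw [← Real.exp_add]; congr 1; simp [hh]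
    calc Real.exp m * (Real.exp (gsF b B x) * (1 + (h x - m)))
        = Real.exp (gsF b B x) * (Real.exp m * ((h x - m) + 1)) := by ring
      _ ≤ Real.exp (gsF b B x) * (Real.exp m * Real.exp (h x - m)) :=
          mul_le_mul_of_nonneg_left p1 (Real.exp_pos _).le
      _ = Real.exp (g x) := by rw [p2, p3]
  have hintL : ∫ x in (0:ℝ)..1, Real.exp m * (Real.exp (gsF b B x) * (1 + (h x - m)))
      = Real.exp m * B := by
    have e : (fun x => Real.exp m * (Real.exp (gsF b B x) * (1 + (h x - m))))
        = fun x => Real.exp m * ((Real.exp (gsF b B x)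
          + ((fun y => h y * Real.exp (gsF b B y)) x)) - m * Real.exp (gsF b B x)) := by
      funext x; ring
    rw [e, intervalIntegral.integral_const_mul,
      intervalIntegral.integral_sub
        (f := fun x => Real.exp (gsF b B x) + (fun y => h y * Real.exp (gsF b B y)) x)
        (g := fun x => m * Real.exp (gsF b B x))
        ((hegs.intervalIntegrable _ _).add
          ((hhc.mul hegs).intervalIntegrable _ _))
        ((continuous_const.mul hegs).intervalIntegrable _ _),
      intervalIntegral.integral_add (f := fun x => Real.exp (gsF b B x))
        (g := fun y => h y * Real.exp (gsF b B y)) (hegs.intervalIntegrable _ _)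
        ((hhc.mul hegs).intervalIntegrable _ _),
      intervalIntegral.integral_const_mul, hZ]
    have : ∫ x in (0:ℝ)..1, h x * Real.exp (gsF b B x) = m * B := by
      rw [hm]; field_simp
    rw [this]; ring
  have hjen : Real.exp m * B ≤ ∫ x in (0:ℝ)..1, Real.exp (g x) := by
    rw [← hintL]
    refine intervalIntegral.integral_mono_on zero_le_one ?_ ?_ (fun x _ => hmono x)
    · exact (continuous_const.mul (hegs.mul
        (continuous_const.add (hhc.sub continuous_const)))).intervalIntegrable _ _
    · exact heg.intervalIntegrable _ _
  have hlog : Real.log B + m ≤ Real.log (∫ x in (0:ℝ)..1, Real.exp (g x)) := by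
    have hpos : (0:ℝ) < Real.exp m * B := mul_pos (Real.exp_pos m) hB0
    have := Real.log_le_log hpos hjen
    rw [Real.log_mul (Real.exp_pos m).ne' hB0.ne', Real.log_exp] at this
    linarith
  have hkey := big_ineq b B g hb0 hb1 h1B hE hg
  have hsub : ∫ x in (0:ℝ)..B, h x
      = (∫ x in (0:ℝ)..B, g x) - ∫ x in (0:ℝ)..B, gsF b B x := by
    rw [hh, intervalIntegral.integral_sub (hgc.intervalIntegrable _ _)
      (hgsc.intervalIntegrable _ _)]
  have hsub2 : ∫ x in (0:ℝ)..1, (g x - gsF b B x) * Real.exp (gsF b B x) = m * B := by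
    rw [hm]; field_simp
    rfl
  rw [hsub, hsub2] at hkey
  have hBinv : (0:ℝ) < B⁻¹ := inv_pos.mpr hB0
  nlinarith [hkey, hlog, mul_le_mul_of_nonneg_left hkey hBinv.le]

end Aux

theorem gDiv_unif_extended
    (c b : ℝ) (hc : 0 < c) (hb0 : 0 < b) (hb1 : b < 1)
    (hbeq : Real.exp (1 - b) - (1 - b) = 1 + c) :
    gDivF (lipSet 1) (unifMeas (1 + c)) (unifMeas 1)
      = ((-Real.log (1 + c) + (1 + c - b) ^ 2 / (2 * (1 + c)) : ℝ) : EReal) := by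
  set B : ℝ := 1 + c with hB
  have h1B : 1 < B := by rw [hB]; linarith
  have hB0 : (0:ℝ) < B := lt_trans one_pos h1B
  have hE : Real.exp (1 - b) = B + 1 - b := by rw [hB]; linarith
  have hbB : b ≤ B := le_trans hb1.le h1B.le
  -- value at any g, in interval-integral form
  have hval : ∀ g : ℝ → ℝ,
      (∫ x, g x ∂unifMeas B) - Real.log (∫ x, Real.exp (g x) ∂unifMeas 1)
      = B⁻¹ * (∫ x in (0:ℝ)..B, g x) - Real.log (∫ x in (0:ℝ)..1, Real.exp (g x)) := by
    intro g
    rw [integral_unifMeas B hB0 g, integral_unifMeas 1 one_pos (fun x => Real.exp (g x))]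
    norm_num
  have hVgs : B⁻¹ * (∫ x in (0:ℝ)..B, gsF b B x) - Real.log B
      = -Real.log B + (B - b) ^ 2 / (2 * B) := by
    rw [int_gsF b B hb0.le hbB]
    field_simp
    ring
  have hZgs : ∫ x in (0:ℝ)..1, Real.exp (gsF b B x) = B := by
    rw [int_exp_gsF b B hb0.le hb1.le h1B.le, hE]; ring
  unfold gDivF
  apply le_antisymm
  · refine iSup_le fun g => iSup_le fun hg => ?_
    rw [EReal.coe_le_coe_iff, hval g]
    calc B⁻¹ * (∫ x in (0:ℝ)..B, g x) - Real.log (∫ x in (0:ℝ)..1, Real.exp (g x))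
        ≤ B⁻¹ * (∫ x in (0:ℝ)..B, gsF b B x) - Real.log B :=
          upper_bound b B g hb0 hb1 h1B hE hg.1
      _ = -Real.log B + (B - b) ^ 2 / (2 * B) := hVgs
  · refine le_iSup₂_of_le (gsF b B) (gsF_mem b B hbB) ?_
    rw [EReal.coe_le_coe_iff, hval (gsF b B), hZgs, hVgs]
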